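/- Every element of the monoid K_ω can be written as γ_{j_1} ⋯ γ_{j_m} · c^l · δ_{i_1} ⋯ δ_{i_n} for some m, n, l ≥ 0 with j_1 > … > j_m and i_1 < … < i_n (the empty product being 1), and this representation is unique: the numbers m, n, l and the index sequences are uniquely determined by the element. -/

import Mathlib

/-- Generators of the monoid `K_ω`: a cup `δ_k` and a cap `γ_k` for every positive integer `k`. -/
inductive KGen : Type
  | cup : ℕ+ → KGen
  | cap : ℕ+ → KGen

/-- Words in the generators, i.e. elements of the free monoid on the generators. -/
abbrev KWord : Type := FreeMonoid KGen

/-- The word consisting of the single cup generator `δ_k`. -/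
def cupW (k : ℕ+) : KWord := FreeMonoid.of (KGen.cup k)

/-- The word consisting of the single cap generator `γ_k`. -/
def capW (k : ℕ+) : KWord := FreeMonoid.of (KGen.cap k)

/-- The defining relations of the monoid `K_ω`: those of `L_ω` together with
`(cup-cap 4) : δ_k γ_k = δ_{k+1} γ_{k+1}`. -/
inductive KRel : KWord → KWord → Prop
  | cup {k l : ℕ+} (h : l ≤ k) : KRel (cupW k * cupW l) (cupW l * cupW (k + 2))
  | cap {k l : ℕ+} (h : l ≤ k) : KRel (capW l * capW k) (capW (k + 2) * capW l)
  | cupcap₁ {k l : ℕ+} (h : l ≤ k) : KRel (cupW l * capW (k + 2)) (capW k * cupW l)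
  | cupcap₂ {k l : ℕ+} (h : l ≤ k) : KRel (cupW (k + 2) * capW l) (capW l * cupW k)
  | cupcap₃ (k : ℕ+) : KRel (cupW k * capW (k + 1)) 1
  | cupcap₃' (k : ℕ+) : KRel (cupW (k + 1) * capW k) 1
  | cupcap₄ (k : ℕ+) : KRel (cupW k * capW k) (cupW (k + 1) * capW (k + 1))

/-- The smallest monoid congruence containing the defining relations of `K_ω`. -/
def KCon : Con KWord := conGen KRel

/-- The monoid `K_ω`, presented by the cups and caps subject to the relations `KRel`. -/
abbrev Komega : Type := KCon.Quotient

/-- The cup `δ_k` as an element of `K_ω`. -/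
def dk (k : ℕ+) : Komega := KCon.mk' (cupW k)

/-- The cap `γ_k` as an element of `K_ω`. -/
def gk (k : ℕ+) : Komega := KCon.mk' (capW k)

/-- The circle `c = δ_1 γ_1` of `K_ω`. -/
def circ : Komega := dk 1 * gk 1



namespace KNF

inductive Out : Type
  | surv (k : ℕ)
  | ann
  | circl
deriving DecidableEq

def capI (k : ℕ) : List ℕ → List ℕ
  | [] => [k]
  | j :: js => if j < k then k :: j :: js else (j+2) :: capI k js

def cupI : ℕ → List ℕ → List ℕ
  | k, [] => [k]
  | k, i :: is => if k < i then k :: i :: is else i :: cupI (k+2) is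

def cupCaps : ℕ → List ℕ → List ℕ × Out
  | k, [] => ([], Out.surv k)
  | k, j :: js =>
    if k + 2 ≤ j then (capI (j-2) (cupCaps k js).1, (cupCaps k js).2)
    else if j = k + 1 ∨ k = j + 1 then (js, Out.ann)
    else if j = k then (js, Out.circl)
    else (capI j (cupCaps (k-2) js).1, (cupCaps (k-2) js).2)

@[simp] lemma capI_nil (k : ℕ) : capI k [] = [k] := rfl
lemma capI_cons_lt {j k : ℕ} (js : List ℕ) (h : j < k) : capI k (j :: js) = k :: j :: js := by
  simp only [capI]; rw [if_pos h]
lemma capI_cons_ge {j k : ℕ} (js : List ℕ) (h : k ≤ j) :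
    capI k (j :: js) = (j+2) :: capI k js := by
  simp only [capI]; rw [if_neg (by omega)]

@[simp] lemma cupI_nil (k : ℕ) : cupI k [] = [k] := rfl
lemma cupI_cons_lt {i k : ℕ} (is : List ℕ) (h : k < i) : cupI k (i :: is) = k :: i :: is := by
  simp only [cupI]; rw [if_pos h]
lemma cupI_cons_ge {i k : ℕ} (is : List ℕ) (h : i ≤ k) :
    cupI k (i :: is) = i :: cupI (k+2) is := by
  simp only [cupI]; rw [if_neg (by omega)]

@[simp] lemma cupCaps_nil (k : ℕ) : cupCaps k [] = ([], Out.surv k) := rfl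
lemma cupCaps_big {j k : ℕ} (js : List ℕ) (h : k + 2 ≤ j) :
    cupCaps k (j :: js) = (capI (j-2) (cupCaps k js).1, (cupCaps k js).2) := by
  simp only [cupCaps]; rw [if_pos h]
lemma cupCaps_ann {j k : ℕ} (js : List ℕ) (h : j = k + 1 ∨ k = j + 1) :
    cupCaps k (j :: js) = (js, Out.ann) := by
  simp only [cupCaps]; rw [if_neg (by omega), if_pos h]
lemma cupCaps_circ {j k : ℕ} (js : List ℕ) (h : j = k) :
    cupCaps k (j :: js) = (js, Out.circl) := by
  simp only [cupCaps]; rw [if_neg (by omega), if_neg (by omega), if_pos h]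
lemma cupCaps_small {j k : ℕ} (js : List ℕ) (h : j + 2 ≤ k) :
    cupCaps k (j :: js) = (capI j (cupCaps (k-2) js).1, (cupCaps (k-2) js).2) := by
  simp only [cupCaps]; rw [if_neg (by omega), if_neg (by omega), if_neg (by omega)]

lemma capI_capI : ∀ (js : List ℕ) {l k : ℕ}, l ≤ k →
    capI l (capI k js) = capI (k+2) (capI l js)
  | [], l, k, h => by
      rw [capI_nil, capI_nil, capI_cons_ge _ h, capI_cons_lt _ (by omega), capI_nil]
  | j :: rest, l, k, h => by
      rcases lt_or_ge j l with h1 | h1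
      · rw [capI_cons_lt _ (by omega : j < k), capI_cons_lt _ h1,
          capI_cons_ge _ h, capI_cons_lt _ h1, capI_cons_lt _ (by omega : l < k + 2)]
      · rcases lt_or_ge j k with h2 | h2
        · rw [capI_cons_lt _ h2, capI_cons_ge _ h, capI_cons_ge _ h1,
            capI_cons_lt _ (by omega : j + 2 < k + 2)]
        · rw [capI_cons_ge _ (by omega : k ≤ j), capI_cons_ge _ (by omega : l ≤ j + 2),
            capI_cons_ge _ h1, capI_cons_ge _ (by omega : k + 2 ≤ j + 2),
            capI_capI rest h]

lemma cupI_cupI : ∀ (is : List ℕ) {l k : ℕ}, l ≤ k →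
    cupI k (cupI l is) = cupI l (cupI (k+2) is)
  | [], l, k, h => by
      rw [cupI_nil, cupI_nil, cupI_cons_ge _ h, cupI_cons_lt _ (by omega), cupI_nil]
  | i :: rest, l, k, h => by
      rcases lt_or_ge k i with h1 | h1
      · rw [cupI_cons_lt _ (by omega : l < i), cupI_cons_ge _ h]
        rcases lt_or_ge (k+2) i with h2 | h2
        · rw [cupI_cons_lt _ h2, cupI_cons_lt _ (by omega : l < k + 2)]
        · rw [cupI_cons_ge _ (by omega : i ≤ k + 2), cupI_cons_lt _ (by omega : l < i)]
      · rcases lt_or_ge l i with h2 | h2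
        · rw [cupI_cons_lt _ h2, cupI_cons_ge _ h, cupI_cons_ge _ (by omega : i ≤ k + 2),
            cupI_cons_lt _ h2]
        · rw [cupI_cons_ge _ h2, cupI_cons_ge _ (by omega : i ≤ k),
            cupI_cons_ge _ (by omega : i ≤ k + 2), cupI_cons_ge _ h2,
            cupI_cupI rest (by omega : l + 2 ≤ k + 2)]

lemma capI_of_forall_lt : ∀ (js : List ℕ) {j : ℕ}, (∀ x ∈ js, x < j) → capI j js = j :: js
  | [], j, _ => rfl
  | a :: rest, j, h => capI_cons_lt _ (h a (by simp))

lemma cupI_of_forall_lt : ∀ (is : List ℕ) {i : ℕ}, (∀ x ∈ is, i < x) → cupI i is = i :: is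
  | [], i, _ => rfl
  | a :: rest, i, h => cupI_cons_lt _ (h a (by simp))

lemma mem_capI : ∀ (js : List ℕ) (k x : ℕ), x ∈ capI k js →
    x = k ∨ x ∈ js ∨ ∃ y ∈ js, x = y + 2
  | [], k, x, h => by simp only [capI_nil, List.mem_singleton] at h; exact Or.inl h
  | j :: rest, k, x, h => by
      rcases lt_or_ge j k with h1 | h1
      · rw [capI_cons_lt _ h1] at h
        simp only [List.mem_cons] at h
        rcases h with h | h | h
        · exact Or.inl h
        · exact Or.inr (Or.inl (by simp [h]))
        · exact Or.inr (Or.inl (by simp [h]))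
      · rw [capI_cons_ge _ h1] at h
        simp only [List.mem_cons] at h
        rcases h with h | h
        · exact Or.inr (Or.inr ⟨j, by simp, h⟩)
        · rcases mem_capI rest k x h with h | h | ⟨y, hy, hxy⟩
          · exact Or.inl h
          · exact Or.inr (Or.inl (by simp [h]))
          · exact Or.inr (Or.inr ⟨y, by simp [hy], hxy⟩)

lemma mem_cupI : ∀ (is : List ℕ) (k x : ℕ), x ∈ cupI k is → x ∈ is ∨ k ≤ x
  | [], k, x, h => by simp only [cupI_nil, List.mem_singleton] at h; omega
  | i :: rest, k, x, h => by
      rcases lt_or_ge k i with h1 | h1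
      · rw [cupI_cons_lt _ h1] at h
        simp only [List.mem_cons] at h
        rcases h with h | h
        · omega
        · exact Or.inl (by simpa using h)
      · rw [cupI_cons_ge _ h1] at h
        simp only [List.mem_cons] at h
        rcases h with h | h
        · exact Or.inl (by simp [h])
        · rcases mem_cupI rest (k+2) x h with h | h
          · exact Or.inl (by simp [h])
          · exact Or.inr (by omega)

lemma sorted_capI : ∀ (js : List ℕ) (k : ℕ), js.Pairwise (· > ·) → (capI k js).Pairwise (· > ·)
  | [], k, _ => by simp
  | j :: rest, k, h => by
      rw [List.pairwise_cons] at h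
      obtain ⟨hj, hrest⟩ := h
      rcases lt_or_ge j k with h1 | h1
      · rw [capI_cons_lt _ h1]
        refine List.pairwise_cons.2 ⟨?_, List.pairwise_cons.2 ⟨hj, hrest⟩⟩
        intro b hb
        rcases List.mem_cons.1 hb with rfl | hb
        · exact h1
        · exact lt_trans (hj b hb) h1
      · rw [capI_cons_ge _ h1]
        refine List.pairwise_cons.2 ⟨?_, sorted_capI rest k hrest⟩
        intro b hb
        rcases mem_capI rest k b hb with rfl | hb | ⟨y, hy, rfl⟩
        · omega
        · have := hj b hb; omega
        · have := hj y hy; omega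

lemma sorted_cupI : ∀ (is : List ℕ) (k : ℕ), is.Pairwise (· < ·) → (cupI k is).Pairwise (· < ·)
  | [], k, _ => by simp
  | i :: rest, k, h => by
      rw [List.pairwise_cons] at h
      obtain ⟨hi, hrest⟩ := h
      rcases lt_or_ge k i with h1 | h1
      · rw [cupI_cons_lt _ h1]
        refine List.pairwise_cons.2 ⟨?_, List.pairwise_cons.2 ⟨hi, hrest⟩⟩
        intro b hb
        rcases List.mem_cons.1 hb with rfl | hb
        · exact h1
        · exact lt_trans h1 (hi b hb)
      · rw [cupI_cons_ge _ h1]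
        refine List.pairwise_cons.2 ⟨?_, sorted_cupI rest (k+2) hrest⟩
        intro b hb
        rcases mem_cupI rest (k+2) b hb with hb | hb
        · exact hi b hb
        · omega

lemma pos_capI : ∀ (js : List ℕ) (k : ℕ), 0 < k → (∀ x ∈ js, 0 < x) →
    ∀ x ∈ capI k js, 0 < x
  | js, k, hk, h, x, hx => by
      rcases mem_capI js k x hx with rfl | hx | ⟨y, hy, rfl⟩
      · exact hk
      · exact h x hx
      · omega

lemma pos_cupI : ∀ (is : List ℕ) (k : ℕ), 0 < k → (∀ x ∈ is, 0 < x) →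
    ∀ x ∈ cupI k is, 0 < x
  | is, k, hk, h, x, hx => by
      rcases mem_cupI is k x hx with hx | hx
      · exact h x hx
      · omega

lemma sorted_cupCaps : ∀ (js : List ℕ) (k : ℕ), js.Pairwise (· > ·) →
    (cupCaps k js).1.Pairwise (· > ·)
  | [], k, _ => by simp
  | j :: rest, k, h => by
      rw [List.pairwise_cons] at h
      obtain ⟨hj, hrest⟩ := h
      rcases lt_or_ge j (k+2) with h1 | h1
      · rcases Nat.lt_or_ge (j+2) k with h2 | h2
        · rw [cupCaps_small _ (by omega)]
          exact sorted_capI _ _ (sorted_cupCaps rest (k-2) hrest)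
        · by_cases h3 : j = k
          · rw [cupCaps_circ _ h3]; exact hrest
          · by_cases h4 : j = k + 1 ∨ k = j + 1
            · rw [cupCaps_ann _ h4]; exact hrest
            · rw [cupCaps_small _ (by omega)]
              exact sorted_capI _ _ (sorted_cupCaps rest (k-2) hrest)
      · rw [cupCaps_big _ (by omega)]
        exact sorted_capI _ _ (sorted_cupCaps rest k hrest)

lemma pos_cupCaps : ∀ (js : List ℕ) (k : ℕ), 0 < k → (∀ x ∈ js, 0 < x) →
    ∀ x ∈ (cupCaps k js).1, 0 < x
  | [], k, hk, h, x, hx => by simp at hx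
  | j :: rest, k, hk, h, x, hx => by
      have hrest : ∀ y ∈ rest, 0 < y := fun y hy => h y (by simp [hy])
      have hj : 0 < j := h j (by simp)
      rcases Nat.lt_or_ge j (k+2) with h1 | h1
      · rcases Nat.lt_or_ge (j+2) k with h2 | h2
        · rw [cupCaps_small _ (by omega)] at hx
          exact pos_capI _ _ (h j (by simp)) (pos_cupCaps rest (k-2) (by omega) hrest) x hx
        · by_cases h3 : j = k
          · rw [cupCaps_circ _ h3] at hx; exact hrest x hx
          · by_cases h4 : j = k + 1 ∨ k = j + 1
            · rw [cupCaps_ann _ h4] at hx; exact hrest x hx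
            · rw [cupCaps_small _ (by omega)] at hx
              exact pos_capI _ _ (h j (by simp)) (pos_cupCaps rest (k-2) (by omega) hrest) x hx
      · rw [cupCaps_big _ (by omega)] at hx
        exact pos_capI _ _ (by omega) (pos_cupCaps rest k hk hrest) x hx

lemma pos_surv : ∀ (js : List ℕ) (k k' : ℕ), 0 < k → (∀ x ∈ js, 0 < x) →
    (cupCaps k js).2 = Out.surv k' → 0 < k'
  | [], k, k', hk, _, h => by simp only [cupCaps_nil] at h; cases h; exact hk
  | j :: rest, k, k', hk, hp, h => by
      have hj : 0 < j := hp j (by simp)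
      have hrest : ∀ y ∈ rest, 0 < y := fun y hy => hp y (by simp [hy])
      rcases Nat.lt_or_ge j (k+2) with h1 | h1
      · rcases Nat.lt_or_ge (j+2) k with h2 | h2
        · rw [cupCaps_small _ (by omega)] at h
          exact pos_surv rest (k-2) k' (by omega) hrest h
        · by_cases h3 : j = k
          · rw [cupCaps_circ _ h3] at h; cases h
          · by_cases h4 : j = k + 1 ∨ k = j + 1
            · rw [cupCaps_ann _ h4] at h; cases h
            · rw [cupCaps_small _ (by omega)] at h
              exact pos_surv rest (k-2) k' (by omega) hrest h
      · rw [cupCaps_big _ (by omega)] at h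
        exact pos_surv rest k k' hk hrest h

end KNF

namespace KNF

lemma CC1 : ∀ (js : List ℕ) {a b : ℕ}, 0 < a → a + 2 ≤ b →
    cupCaps a (capI b js) = (capI (b-2) (cupCaps a js).1, (cupCaps a js).2)
  | [], a, b, ha, hab => by
      rw [capI_nil, cupCaps_big _ (by omega)]
  | j :: rest, a, b, ha, hab => by
      rcases lt_or_ge j b with h1 | h1
      · rw [capI_cons_lt _ h1, cupCaps_big _ (by omega : a + 2 ≤ b)]
      · rw [capI_cons_ge _ h1, cupCaps_big _ (by omega : a + 2 ≤ j + 2),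
          CC1 rest ha hab, cupCaps_big _ (by omega : a + 2 ≤ j)]
        have e : j + 2 - 2 = (j - 2) + 2 := by omega
        rw [e, ← capI_capI _ (show b - 2 ≤ j - 2 by omega)]

lemma CC2 : ∀ (js : List ℕ) {a b : ℕ}, 0 < a → (b = a + 1 ∨ a = b + 1) →
    js.Pairwise (· > ·) → cupCaps a (capI b js) = (js, Out.ann)
  | [], a, b, ha, hb, _ => by
      rw [capI_nil, cupCaps_ann _ hb]
  | j :: rest, a, b, ha, hb, hs => by
      rw [List.pairwise_cons] at hs
      obtain ⟨hj, hrest⟩ := hs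
      rcases lt_or_ge j b with h1 | h1
      · rw [capI_cons_lt _ h1, cupCaps_ann _ hb]
      · rw [capI_cons_ge _ h1]
        rcases le_or_gt a j with h2 | h2
        · rw [cupCaps_big _ (by omega : a + 2 ≤ j + 2), CC2 rest ha hb hrest]
          have e : j + 2 - 2 = j := by omega
          rw [e, capI_of_forall_lt rest (fun x hx => hj x hx)]
        · have hjb : j = b := by omega
          rw [cupCaps_ann _ (by omega : j + 2 = a + 1 ∨ a = (j + 2) + 1), hjb,
            capI_of_forall_lt rest (fun x hx => by have := hj x hx; omega)]

lemma CC3 : ∀ (js : List ℕ) {a : ℕ}, 0 < a →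
    js.Pairwise (· > ·) → cupCaps a (capI a js) = (js, Out.circl)
  | [], a, ha, _ => by
      rw [capI_nil, cupCaps_circ _ rfl]
  | j :: rest, a, ha, hs => by
      rw [List.pairwise_cons] at hs
      obtain ⟨hj, hrest⟩ := hs
      rcases lt_or_ge j a with h1 | h1
      · rw [capI_cons_lt _ h1, cupCaps_circ _ rfl]
      · rw [capI_cons_ge _ h1, cupCaps_big _ (by omega : a + 2 ≤ j + 2), CC3 rest ha hrest]
        have e : j + 2 - 2 = j := by omega
        rw [e, capI_of_forall_lt rest (fun x hx => hj x hx)]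

lemma CC4 : ∀ (js : List ℕ) {a b : ℕ}, 0 < b → b + 2 ≤ a →
    cupCaps a (capI b js) = (capI b (cupCaps (a-2) js).1, (cupCaps (a-2) js).2)
  | [], a, b, hb, hba => by
      rw [capI_nil, cupCaps_small _ (by omega)]
  | j :: rest, a, b, hb, hba => by
      rcases lt_or_ge j b with h1 | h1
      · rw [capI_cons_lt _ h1, cupCaps_small _ (by omega : b + 2 ≤ a)]
      · rw [capI_cons_ge _ h1]
        rcases le_or_gt a j with h2 | h2
        · rw [cupCaps_big _ (by omega : a + 2 ≤ j + 2), CC4 rest hb hba,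
            cupCaps_big _ (by omega : (a - 2) + 2 ≤ j)]
          have e : j + 2 - 2 = (j - 2) + 2 := by omega
          rw [e, ← capI_capI _ (show b ≤ j - 2 by omega)]
        · rcases (by omega : j = a - 1 ∨ j = a - 2 ∨ j = a - 3 ∨ j + 4 ≤ a) with h3 | h3 | h3 | h3
          · rw [cupCaps_ann _ (by omega : j + 2 = a + 1 ∨ a = (j + 2) + 1),
              cupCaps_ann _ (by omega : j = (a - 2) + 1 ∨ (a - 2) = j + 1)]
          · rw [cupCaps_circ _ (by omega : j + 2 = a), cupCaps_circ _ (by omega : j = a - 2)]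
          · rw [cupCaps_ann _ (by omega : j + 2 = a + 1 ∨ a = (j + 2) + 1),
              cupCaps_ann _ (by omega : j = (a - 2) + 1 ∨ (a - 2) = j + 1)]
          · rw [cupCaps_small _ (by omega : (j + 2) + 2 ≤ a), CC4 rest hb (by omega : b + 2 ≤ a - 2),
              cupCaps_small _ (by omega : j + 2 ≤ a - 2)]
            rw [capI_capI _ (show b ≤ j by omega)]

@[ext]
structure Raw where
  js : List ℕ
  l : ℕ
  is : List ℕ
deriving DecidableEq

def outL : Out → ℕ
  | .circl => 1
  | _ => 0

def outI : Out → List ℕ → List ℕ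
  | .surv k => cupI k
  | _ => fun is => is

def capA (k : ℕ) (n : Raw) : Raw := ⟨capI k n.js, n.l, n.is⟩
def cupA (k : ℕ) (n : Raw) : Raw :=
  ⟨(cupCaps k n.js).1, n.l + outL (cupCaps k n.js).2, outI (cupCaps k n.js).2 n.is⟩
def bump (n : Raw) : Raw := ⟨n.js, n.l + 1, n.is⟩

lemma CCA1 {a b : ℕ} (n : Raw) (ha : 0 < a) (hab : a + 2 ≤ b) :
    cupA a (capA b n) = capA (b-2) (cupA a n) := by
  simp only [cupA, capA, CC1 n.js ha hab]

lemma CCA2 {a b : ℕ} (n : Raw) (ha : 0 < a) (hb : b = a + 1 ∨ a = b + 1)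
    (hs : n.js.Pairwise (· > ·)) : cupA a (capA b n) = n := by
  simp only [cupA, capA, CC2 n.js ha hb hs, outL, outI]
  rfl

lemma CCA3 {a : ℕ} (n : Raw) (ha : 0 < a) (hs : n.js.Pairwise (· > ·)) :
    cupA a (capA a n) = bump n := by
  simp only [cupA, capA, CC3 n.js ha hs, outL, outI, bump]

lemma CCA4 {a b : ℕ} (n : Raw) (hb : 0 < b) (hba : b + 2 ≤ a) :
    cupA a (capA b n) = capA b (cupA (a-2) n) := by
  simp only [cupA, capA, CC4 n.js hb hba]

lemma cupA_nil {k lc : ℕ} {is : List ℕ} : cupA k ⟨[], lc, is⟩ = ⟨[], lc, cupI k is⟩ := by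
  simp only [cupA, cupCaps_nil, outL, outI]
  rfl

lemma cupA_big {j k lc : ℕ} {js is : List ℕ} (h : k + 2 ≤ j) :
    cupA k ⟨j :: js, lc, is⟩ = capA (j-2) (cupA k ⟨js, lc, is⟩) := by
  simp only [cupA, capA, cupCaps_big _ h]

lemma cupA_ann {j k lc : ℕ} {js is : List ℕ} (h : j = k + 1 ∨ k = j + 1) :
    cupA k ⟨j :: js, lc, is⟩ = ⟨js, lc, is⟩ := by
  simp only [cupA, cupCaps_ann _ h, outL, outI]
  rfl

lemma cupA_circ {j k lc : ℕ} {js is : List ℕ} (h : j = k) :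
    cupA k ⟨j :: js, lc, is⟩ = ⟨js, lc + 1, is⟩ := by
  simp only [cupA, cupCaps_circ _ h, outL, outI]

lemma cupA_small {j k lc : ℕ} {js is : List ℕ} (h : j + 2 ≤ k) :
    cupA k ⟨j :: js, lc, is⟩ = capA j (cupA (k-2) ⟨js, lc, is⟩) := by
  simp only [cupA, capA, cupCaps_small _ h]

lemma cupA_bump {k : ℕ} (n : Raw) : cupA k (bump n) = bump (cupA k n) := by
  simp only [cupA, bump, Nat.add_right_comm]

lemma DD : ∀ (js : List ℕ) {lc : ℕ} {is : List ℕ} {l k : ℕ}, 0 < l → l ≤ k →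
    js.Pairwise (· > ·) → (∀ x ∈ js, 0 < x) →
    cupA k (cupA l ⟨js, lc, is⟩) = cupA l (cupA (k+2) ⟨js, lc, is⟩)
  | [], lc, is, l, k, hl, hlk, _, _ => by
      rw [cupA_nil, cupA_nil, cupA_nil, cupA_nil, cupI_cupI is hlk]
  | j :: rest, lc, is, l, k, hl, hlk, hs, hp => by
      rw [List.pairwise_cons] at hs
      obtain ⟨hj, hrest⟩ := hs
      have hjpos : 0 < j := hp j (by simp)
      have hprest : ∀ x ∈ rest, 0 < x := fun x hx => hp x (by simp [hx])
      have hk : 0 < k := by omega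
      rcases (by omega : l + 2 ≤ j ∨ j = l + 1 ∨ j = l ∨ l = j + 1 ∨ j + 2 ≤ l)
        with hc | hc | hc | hc | hc
      · -- l + 2 ≤ j
        rw [cupA_big hc]
        rcases (by omega : k + 4 ≤ j ∨ j = k + 3 ∨ j = k + 2 ∨ j = k + 1 ∨ j ≤ k)
          with hd | hd | hd | hd | hd
        · rw [CCA1 _ hk (by omega : k + 2 ≤ j - 2), DD rest hl hlk hrest hprest,
            cupA_big (by omega : (k + 2) + 2 ≤ j),
            CCA1 _ hl (by omega : l + 2 ≤ j - 2)]
        · rw [CCA2 _ hk (by omega : j - 2 = k + 1 ∨ k = (j - 2) + 1)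
            (sorted_cupCaps rest l hrest), cupA_ann (by omega : j = (k + 2) + 1 ∨ (k + 2) = j + 1)]
        · have e : j - 2 = k := by omega
          rw [e, CCA3 _ hk (sorted_cupCaps rest l hrest), cupA_circ (by omega : j = k + 2),
            show (⟨rest, lc + 1, is⟩ : Raw) = bump ⟨rest, lc, is⟩ from rfl, cupA_bump]
        · rw [CCA2 _ hk (by omega : j - 2 = k + 1 ∨ k = (j - 2) + 1)
            (sorted_cupCaps rest l hrest), cupA_ann (by omega : j = (k + 2) + 1 ∨ (k + 2) = j + 1)]
        · rw [CCA4 _ (by omega : 0 < j - 2) (by omega : (j - 2) + 2 ≤ k),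
            DD rest hl (by omega : l ≤ k - 2) hrest hprest,
            show k - 2 + 2 = k from by omega,
            cupA_small (by omega : j + 2 ≤ k + 2),
            show k + 2 - 2 = k from by omega,
            CCA1 _ hl (by omega : l + 2 ≤ j)]
      · -- j = l + 1
        rw [cupA_ann (Or.inl hc)]
        rcases (by omega : l = k ∨ j ≤ k) with hd | hd
        · subst hd
          rw [cupA_ann (by omega : j = (l + 2) + 1 ∨ (l + 2) = j + 1)]
        · rw [cupA_small (by omega : j + 2 ≤ k + 2), show k + 2 - 2 = k from by omega,
            CCA2 _ hl (by omega : j = l + 1 ∨ l = j + 1) (sorted_cupCaps rest k hrest)]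
      · -- j = l
        rw [cupA_circ hc, show (⟨rest, lc + 1, is⟩ : Raw) = bump ⟨rest, lc, is⟩ from rfl,
          cupA_bump, cupA_small (by omega : j + 2 ≤ k + 2), show k + 2 - 2 = k from by omega,
          ← hc, CCA3 _ (by omega : 0 < j) (sorted_cupCaps rest k hrest)]
      · -- l = j + 1
        rw [cupA_ann (Or.inr hc), cupA_small (by omega : j + 2 ≤ k + 2),
          show k + 2 - 2 = k from by omega,
          CCA2 _ hl (by omega : j = l + 1 ∨ l = j + 1) (sorted_cupCaps rest k hrest)]
      · -- j + 2 ≤ l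
        rw [cupA_small hc, CCA4 _ hjpos (by omega : j + 2 ≤ k),
          DD rest (by omega : 0 < l - 2) (by omega : l - 2 ≤ k - 2) hrest hprest,
          show k - 2 + 2 = k from by omega,
          cupA_small (by omega : j + 2 ≤ k + 2), show k + 2 - 2 = k from by omega,
          CCA4 _ hjpos (by omega : j + 2 ≤ l)]

end KNF

namespace KNF

/-! ### Basic relations in `Komega` -/

lemma krel {u v : KWord} (h : KRel u v) : (KCon.mk' u : Komega) = KCon.mk' v :=
  (Con.eq _).2 (ConGen.Rel.of _ _ h)

lemma B1 {k l : ℕ+} (h : l ≤ k) : dk k * dk l = dk l * dk (k+2) := by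
  simpa only [map_mul, dk, gk] using krel (KRel.cup h)

lemma B2 {k l : ℕ+} (h : l ≤ k) : gk l * gk k = gk (k+2) * gk l := by
  simpa only [map_mul, dk, gk] using krel (KRel.cap h)

lemma B3 {k l : ℕ+} (h : l ≤ k) : dk l * gk (k+2) = gk k * dk l := by
  simpa only [map_mul, dk, gk] using krel (KRel.cupcap₁ h)

lemma B4 {k l : ℕ+} (h : l ≤ k) : dk (k+2) * gk l = gk l * dk k := by
  simpa only [map_mul, dk, gk] using krel (KRel.cupcap₂ h)

lemma B5 (k : ℕ+) : dk k * gk (k+1) = 1 := by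
  simpa only [map_mul, map_one, dk, gk] using krel (KRel.cupcap₃ k)

lemma B5' (k : ℕ+) : dk (k+1) * gk k = 1 := by
  simpa only [map_mul, map_one, dk, gk] using krel (KRel.cupcap₃' k)

lemma B6 (k : ℕ+) : dk k * gk k = dk (k+1) * gk (k+1) := by
  simpa only [map_mul, dk, gk] using krel (KRel.cupcap₄ k)

def pn (k : ℕ) (h : 0 < k) : ℕ+ := ⟨k, h⟩

@[simp] lemma pn_coe (k : ℕ) (h : 0 < k) : ((pn k h : ℕ+) : ℕ) = k := rfl

lemma pn_add_two (k : ℕ) (h : 0 < k) (h' : 0 < k + 2) : pn k h + 2 = pn (k+2) h' :=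
  Subtype.ext rfl

lemma pn_add_one (k : ℕ) (h : 0 < k) (h' : 0 < k + 1) : pn k h + 1 = pn (k+1) h' :=
  Subtype.ext rfl

lemma pn_le {k l : ℕ} {hk : 0 < k} {hl : 0 < l} (h : k ≤ l) : pn k hk ≤ pn l hl := h

lemma dkgkAux : ∀ (n : ℕ) (hn : 0 < n), dk (pn n hn) * gk (pn n hn) = circ := by
  intro n
  induction n with
  | zero => omega
  | succ m ih =>
    intro hn
    rcases Nat.lt_or_ge 0 m with hm | hm
    · have e : pn (m+1) hn = pn m hm + 1 := (pn_add_one m hm hn).symm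
      rw [e, ← B6 (pn m hm), ih hm]
    · have e : pn (m+1) hn = 1 := by
        apply Subtype.ext; show m + 1 = 1; omega
      rw [e]; rfl

lemma dkgk (k : ℕ+) : dk k * gk k = circ := dkgkAux (k : ℕ) k.2

lemma circ_dk (k : ℕ+) : circ * dk k = dk k * circ := by
  have h1 : dk k * dk k = dk k * dk (k+2) := B1 le_rfl
  have h2 : dk (k+2) * gk k = gk k * dk k := B4 le_rfl
  calc circ * dk k = (dk k * gk k) * dk k := by rw [dkgk]
    _ = dk k * (gk k * dk k) := by rw [mul_assoc]
    _ = dk k * (dk (k+2) * gk k) := by rw [h2]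
    _ = (dk k * dk (k+2)) * gk k := by rw [mul_assoc]
    _ = (dk k * dk k) * gk k := by rw [h1]
    _ = dk k * (dk k * gk k) := by rw [mul_assoc]
    _ = dk k * circ := by rw [dkgk]

lemma circ_gk (k : ℕ+) : circ * gk k = gk k * circ := by
  have h1 : gk k * gk k = gk (k+2) * gk k := B2 le_rfl
  have h2 : dk k * gk (k+2) = gk k * dk k := B3 le_rfl
  calc circ * gk k = (dk k * gk k) * gk k := by rw [dkgk]
    _ = dk k * (gk k * gk k) := by rw [mul_assoc]
    _ = dk k * (gk (k+2) * gk k) := by rw [h1]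
    _ = (dk k * gk (k+2)) * gk k := by rw [mul_assoc]
    _ = (gk k * dk k) * gk k := by rw [h2]
    _ = gk k * (dk k * gk k) := by rw [mul_assoc]
    _ = gk k * circ := by rw [dkgk]

/-! ### `ℕ`-indexed generators -/

def gkN (n : ℕ) : Komega := if h : 0 < n then gk (pn n h) else 1
def dkN (n : ℕ) : Komega := if h : 0 < n then dk (pn n h) else 1

lemma gkN_pos {n : ℕ} (h : 0 < n) : gkN n = gk (pn n h) := dif_pos h
lemma dkN_pos {n : ℕ} (h : 0 < n) : dkN n = dk (pn n h) := dif_pos h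

lemma gkN_coe (k : ℕ+) : gkN (k : ℕ) = gk k := gkN_pos k.2
lemma dkN_coe (k : ℕ+) : dkN (k : ℕ) = dk k := dkN_pos k.2

lemma dkN_dkN {l k : ℕ} (hl : 0 < l) (h : l ≤ k) : dkN k * dkN l = dkN l * dkN (k+2) := by
  have hk : 0 < k := by omega
  rw [dkN_pos hl, dkN_pos hk, dkN_pos (show 0 < k + 2 by omega),
    ← pn_add_two k hk, B1 (pn_le h)]

lemma gkN_gkN {l k : ℕ} (hl : 0 < l) (h : l ≤ k) : gkN l * gkN k = gkN (k+2) * gkN l := by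
  have hk : 0 < k := by omega
  rw [gkN_pos hl, gkN_pos hk, gkN_pos (show 0 < k + 2 by omega),
    ← pn_add_two k hk, B2 (pn_le h)]

lemma dgN₁ {l k : ℕ} (hl : 0 < l) (h : l ≤ k) : dkN l * gkN (k+2) = gkN k * dkN l := by
  have hk : 0 < k := by omega
  rw [dkN_pos hl, gkN_pos hk, gkN_pos (show 0 < k + 2 by omega),
    ← pn_add_two k hk, B3 (pn_le h)]

lemma dgN₂ {l k : ℕ} (hl : 0 < l) (h : l ≤ k) : dkN (k+2) * gkN l = gkN l * dkN k := by
  have hk : 0 < k := by omega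
  rw [gkN_pos hl, dkN_pos hk, dkN_pos (show 0 < k + 2 by omega),
    ← pn_add_two k hk, B4 (pn_le h)]

lemma dgN₃ {k : ℕ} (hk : 0 < k) : dkN k * gkN (k+1) = 1 := by
  rw [dkN_pos hk, gkN_pos (show 0 < k + 1 by omega), ← pn_add_one k hk, B5]

lemma dgN₃' {k : ℕ} (hk : 0 < k) : dkN (k+1) * gkN k = 1 := by
  rw [gkN_pos hk, dkN_pos (show 0 < k + 1 by omega), ← pn_add_one k hk, B5']

lemma dkgkN {k : ℕ} (hk : 0 < k) : dkN k * gkN k = circ := by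
  rw [dkN_pos hk, gkN_pos hk, dkgk]

lemma circ_dkN (k : ℕ) : circ * dkN k = dkN k * circ := by
  by_cases h : 0 < k
  · rw [dkN_pos h, circ_dk]
  · rw [dkN, dif_neg h, mul_one, one_mul]

lemma circ_gkN (k : ℕ) : circ * gkN k = gkN k * circ := by
  by_cases h : 0 < k
  · rw [gkN_pos h, circ_gk]
  · rw [gkN, dif_neg h, mul_one, one_mul]

lemma circpow_dkN (l k : ℕ) : circ ^ l * dkN k = dkN k * circ ^ l :=
  ((Commute.symm (circ_dkN k)).pow_right l).symm.eq

lemma circpow_gkN (l k : ℕ) : circ ^ l * gkN k = gkN k * circ ^ l :=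
  ((Commute.symm (circ_gkN k)).pow_right l).symm.eq

/-! ### products of generators -/

def capsP (js : List ℕ) : Komega := (js.map gkN).prod
def cupsP (is : List ℕ) : Komega := (is.map dkN).prod

@[simp] lemma capsP_nil : capsP [] = 1 := rfl
@[simp] lemma cupsP_nil : cupsP [] = 1 := rfl
lemma capsP_cons (j : ℕ) (js : List ℕ) : capsP (j :: js) = gkN j * capsP js := by
  simp [capsP]
lemma cupsP_cons (i : ℕ) (is : List ℕ) : cupsP (i :: is) = dkN i * cupsP is := by
  simp [cupsP]

lemma gkN_capsP : ∀ (js : List ℕ) {k : ℕ}, 0 < k → (∀ x ∈ js, 0 < x) →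
    gkN k * capsP js = capsP (capI k js)
  | [], k, hk, _ => by simp [capsP_cons]
  | j :: rest, k, hk, hp => by
      have hj : 0 < j := hp j (by simp)
      have hrest : ∀ x ∈ rest, 0 < x := fun x hx => hp x (by simp [hx])
      rcases lt_or_ge j k with h1 | h1
      · rw [capI_cons_lt _ h1, capsP_cons, capsP_cons, capsP_cons]
      · rw [capI_cons_ge _ h1, capsP_cons, capsP_cons, ← mul_assoc,
          gkN_gkN hk h1, mul_assoc, gkN_capsP rest hk hrest]

lemma dkN_cupsP : ∀ (is : List ℕ) {k : ℕ}, 0 < k → (∀ x ∈ is, 0 < x) →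
    dkN k * cupsP is = cupsP (cupI k is)
  | [], k, hk, _ => by simp [cupsP_cons]
  | i :: rest, k, hk, hp => by
      have hi : 0 < i := hp i (by simp)
      have hrest : ∀ x ∈ rest, 0 < x := fun x hx => hp x (by simp [hx])
      rcases lt_or_ge k i with h1 | h1
      · rw [cupI_cons_lt _ h1, cupsP_cons, cupsP_cons, cupsP_cons]
      · rw [cupI_cons_ge _ h1, cupsP_cons, cupsP_cons, ← mul_assoc, dkN_dkN hi h1,
          mul_assoc, dkN_cupsP rest (by omega) hrest]

lemma circ_capsP : ∀ (js : List ℕ), circ * capsP js = capsP js * circ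
  | [] => by simp
  | j :: rest => by
      rw [capsP_cons, ← mul_assoc, circ_gkN, mul_assoc, circ_capsP rest, mul_assoc]

/-! ### evaluation of raw normal forms -/

def evalR (n : Raw) : Komega := capsP n.js * circ ^ n.l * cupsP n.is

def outE : Out → Komega
  | .surv k => dkN k
  | .ann => 1
  | .circl => circ

lemma dkN_capsP_out : ∀ (js : List ℕ) {k : ℕ}, 0 < k → (∀ x ∈ js, 0 < x) →
    dkN k * capsP js = capsP (cupCaps k js).1 * outE (cupCaps k js).2
  | [], k, hk, _ => by simp [outE]
  | j :: rest, k, hk, hp => by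
      have hj : 0 < j := hp j (by simp)
      have hrest : ∀ x ∈ rest, 0 < x := fun x hx => hp x (by simp [hx])
      rw [capsP_cons, ← mul_assoc]
      rcases (by omega : k + 2 ≤ j ∨ j = k + 1 ∨ j = k ∨ k = j + 1 ∨ j + 2 ≤ k)
        with hc | hc | hc | hc | hc
      · rw [cupCaps_big _ hc]
        have e1 : dkN k * gkN j = gkN (j-2) * dkN k := by
          have := dgN₁ hk (show k ≤ j - 2 by omega)
          rwa [show j - 2 + 2 = j by omega] at this
        rw [e1, mul_assoc, dkN_capsP_out rest hk hrest, ← mul_assoc,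
          gkN_capsP _ (by omega) (pos_cupCaps rest k hk hrest)]
      · rw [cupCaps_ann _ (Or.inl hc), hc, dgN₃ hk, one_mul, outE, mul_one]
      · rw [cupCaps_circ _ hc, hc, dkgkN hk, circ_capsP]
        rfl
      · rw [cupCaps_ann _ (Or.inr hc), hc, dgN₃' hj, one_mul, outE, mul_one]
      · rw [cupCaps_small _ hc]
        have e1 : dkN k * gkN j = gkN j * dkN (k-2) := by
          have := dgN₂ hj (show j ≤ k - 2 by omega)
          rwa [show k - 2 + 2 = k by omega] at this
        rw [e1, mul_assoc, dkN_capsP_out rest (by omega) hrest, ← mul_assoc,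
          gkN_capsP _ hj (pos_cupCaps rest (k-2) (by omega) hrest)]

lemma gkN_evalR (n : Raw) {k : ℕ} (hk : 0 < k) (hp : ∀ x ∈ n.js, 0 < x) :
    gkN k * evalR n = evalR (capA k n) := by
  rw [evalR, evalR, capA, ← mul_assoc, ← mul_assoc, gkN_capsP n.js hk hp]

lemma dkN_evalR (n : Raw) {k : ℕ} (hk : 0 < k) (hpj : ∀ x ∈ n.js, 0 < x)
    (hpi : ∀ x ∈ n.is, 0 < x) : dkN k * evalR n = evalR (cupA k n) := by
  rw [evalR, ← mul_assoc, ← mul_assoc, dkN_capsP_out n.js hk hpj]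
  rcases ho : (cupCaps k n.js).2 with k' | _ | _
  · have hk' : 0 < k' := pos_surv n.js k k' hk hpj ho
    rw [evalR]
    simp only [cupA, ho, outE, outL, outI]
    rw [mul_assoc (capsP _), ← circpow_dkN, ← mul_assoc, mul_assoc,
      dkN_cupsP n.is hk' hpi, Nat.add_zero]
  · rw [evalR]
    simp only [cupA, ho, outE, outL, outI]
    rw [mul_one, Nat.add_zero]
  · rw [evalR]
    simp only [cupA, ho, outE, outL, outI]
    rw [mul_assoc (capsP _), mul_assoc (capsP _), ← pow_succ', ← mul_assoc]

end KNF

namespace KNF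

/-! ### The action on normal forms -/

def Good (n : Raw) : Prop :=
  n.js.Pairwise (· > ·) ∧ n.is.Pairwise (· < ·) ∧ (∀ x ∈ n.js, 0 < x) ∧ (∀ x ∈ n.is, 0 < x)

def NF : Type := {n : Raw // Good n}

lemma good_capA {k : ℕ} (hk : 0 < k) {n : Raw} (h : Good n) : Good (capA k n) := by
  obtain ⟨h1, h2, h3, h4⟩ := h
  exact ⟨sorted_capI _ _ h1, h2, pos_capI _ _ hk h3, h4⟩

lemma good_cupA {k : ℕ} (hk : 0 < k) {n : Raw} (h : Good n) : Good (cupA k n) := by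
  obtain ⟨h1, h2, h3, h4⟩ := h
  have his : ((cupA k n).is).Pairwise (· < ·) ∧ (∀ x ∈ (cupA k n).is, 0 < x) := by
    rcases ho : (cupCaps k n.js).2 with k' | _ | _
    · have hk' := pos_surv n.js k k' hk h3 ho
      simp only [cupA, ho, outI]
      exact ⟨sorted_cupI _ _ h2, pos_cupI _ _ hk' h4⟩
    · simp only [cupA, ho, outI]; exact ⟨h2, h4⟩
    · simp only [cupA, ho, outI]; exact ⟨h2, h4⟩
  exact ⟨sorted_cupCaps _ _ h1, his.1, pos_cupCaps _ _ hk h3, his.2⟩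

def capN (k : ℕ+) : Function.End NF := fun n => ⟨capA (k : ℕ) n.1, good_capA k.2 n.2⟩
def cupN (k : ℕ+) : Function.End NF := fun n => ⟨cupA (k : ℕ) n.1, good_cupA k.2 n.2⟩

def actGen : KGen → Function.End NF
  | .cup k => cupN k
  | .cap k => capN k

def actW : KWord →* Function.End NF := FreeMonoid.lift actGen

lemma coe_add_two (k : ℕ+) : ((k + 2 : ℕ+) : ℕ) = (k : ℕ) + 2 := rfl
lemma coe_add_one (k : ℕ+) : ((k + 1 : ℕ+) : ℕ) = (k : ℕ) + 1 := rfl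

lemma act_rel {u v : KWord} (h : KRel u v) : actW u = actW v := by
  cases h with
  | @cup k l hlk =>
    funext n
    show (actW (cupW k * cupW l)) n = (actW (cupW l * cupW (k + 2))) n
    rw [map_mul, map_mul]
    simp only [cupW, actW, FreeMonoid.lift_eval_of]
    apply Subtype.ext
    show cupA (k : ℕ) (cupA (l : ℕ) n.1) = cupA (l : ℕ) (cupA ((k + 2 : ℕ+) : ℕ) n.1)
    obtain ⟨⟨js, lc, is⟩, hg⟩ := n
    rw [coe_add_two]
    exact DD js l.2 hlk hg.1 hg.2.2.1
  | @cap k l hlk =>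
    funext n
    show (actW (capW l * capW k)) n = (actW (capW (k + 2) * capW l)) n
    rw [map_mul, map_mul]
    simp only [capW, actW, FreeMonoid.lift_eval_of]
    apply Subtype.ext
    show capA (l : ℕ) (capA (k : ℕ) n.1) = capA ((k + 2 : ℕ+) : ℕ) (capA (l : ℕ) n.1)
    simp only [capA, coe_add_two]
    rw [capI_capI _ (show (l : ℕ) ≤ (k : ℕ) from hlk)]
  | @cupcap₁ k l hlk =>
    funext n
    show (actW (cupW l * capW (k + 2))) n = (actW (capW k * cupW l)) n
    rw [map_mul, map_mul]
    simp only [cupW, capW, actW, FreeMonoid.lift_eval_of]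
    apply Subtype.ext
    show cupA (l : ℕ) (capA ((k + 2 : ℕ+) : ℕ) n.1) = capA (k : ℕ) (cupA (l : ℕ) n.1)
    have hlk' : (l : ℕ) ≤ (k : ℕ) := hlk
    rw [coe_add_two]
    have hl' : 0 < (l : ℕ) := l.pos
    have e := CCA1 (a := (l : ℕ)) (b := (k : ℕ) + 2) n.1 hl' (by omega)
    rw [show (k : ℕ) + 2 - 2 = (k : ℕ) from by omega] at e
    exact e
  | @cupcap₂ k l hlk =>
    funext n
    show (actW (cupW (k + 2) * capW l)) n = (actW (capW l * cupW k)) n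
    rw [map_mul, map_mul]
    simp only [cupW, capW, actW, FreeMonoid.lift_eval_of]
    apply Subtype.ext
    show cupA ((k + 2 : ℕ+) : ℕ) (capA (l : ℕ) n.1) = capA (l : ℕ) (cupA (k : ℕ) n.1)
    have hlk' : (l : ℕ) ≤ (k : ℕ) := hlk
    rw [coe_add_two]
    have hl' : 0 < (l : ℕ) := l.pos
    have e := CCA4 (a := (k : ℕ) + 2) (b := (l : ℕ)) n.1 hl' (by omega)
    rw [show (k : ℕ) + 2 - 2 = (k : ℕ) from by omega] at e
    exact e
  | cupcap₃ k =>
    funext n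
    show (actW (cupW k * capW (k + 1))) n = (actW 1) n
    rw [map_mul, map_one]
    simp only [cupW, capW, actW, FreeMonoid.lift_eval_of]
    apply Subtype.ext
    show cupA (k : ℕ) (capA ((k + 1 : ℕ+) : ℕ) n.1) = n.1
    rw [coe_add_one]
    exact CCA2 n.1 k.2 (Or.inl rfl) n.2.1
  | cupcap₃' k =>
    funext n
    show (actW (cupW (k + 1) * capW k)) n = (actW 1) n
    rw [map_mul, map_one]
    simp only [cupW, capW, actW, FreeMonoid.lift_eval_of]
    apply Subtype.ext
    show cupA ((k + 1 : ℕ+) : ℕ) (capA (k : ℕ) n.1) = n.1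
    rw [coe_add_one]
    exact CCA2 n.1 (by omega) (Or.inr rfl) n.2.1
  | cupcap₄ k =>
    funext n
    show (actW (cupW k * capW k)) n = (actW (cupW (k + 1) * capW (k + 1))) n
    rw [map_mul, map_mul]
    simp only [cupW, capW, actW, FreeMonoid.lift_eval_of]
    apply Subtype.ext
    show cupA (k : ℕ) (capA (k : ℕ) n.1) = cupA ((k + 1 : ℕ+) : ℕ) (capA ((k + 1 : ℕ+) : ℕ) n.1)
    rw [coe_add_one]
    exact (CCA3 n.1 k.2 n.2.1).trans (CCA3 n.1 (by omega) n.2.1).symm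

/-! ### The homomorphism to `End NF` -/

def phi : Komega →* Function.End NF :=
  Con.lift KCon actW (Con.conGen_le.2 fun u v h => (Con.ker_rel actW).2 (act_rel h))

lemma phi_mk' (w : KWord) : phi (KCon.mk' w) = actW w := Con.lift_coe _ w

lemma phi_dk (k : ℕ+) : phi (dk k) = cupN k := by
  rw [dk, phi_mk']
  exact FreeMonoid.lift_eval_of _ _

lemma phi_gk (k : ℕ+) : phi (gk k) = capN k := by
  rw [gk, phi_mk']
  exact FreeMonoid.lift_eval_of _ _

lemma phi_dkN {k : ℕ} (h : 0 < k) : phi (dkN k) = cupN (pn k h) := by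
  rw [dkN_pos h, phi_dk]

lemma phi_gkN {k : ℕ} (h : 0 < k) : phi (gkN k) = capN (pn k h) := by
  rw [gkN_pos h, phi_gk]

def nf1 : NF := ⟨⟨[], 0, []⟩, by exact ⟨List.Pairwise.nil, List.Pairwise.nil, by simp, by simp⟩⟩

/-! ### Retraction -/

lemma r_cups : ∀ (is : List ℕ), is.Pairwise (· < ·) → (∀ x ∈ is, 0 < x) →
    ((phi (cupsP is)) nf1).1 = ⟨[], 0, is⟩
  | [], _, _ => by rw [cupsP_nil, map_one]; rfl
  | i :: rest, hs, hp => by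
      rw [List.pairwise_cons] at hs
      obtain ⟨hi, hrest⟩ := hs
      have hip : 0 < i := hp i (by simp)
      rw [cupsP_cons, map_mul, phi_dkN hip]
      show cupA i (((phi (cupsP rest)) nf1).1) = _
      rw [r_cups rest hrest (fun x hx => hp x (by simp [hx])), cupA_nil,
        cupI_of_forall_lt rest hi]

lemma r_circ (m : NF) (hm : m.1.js = []) : ((phi circ) m).1 = ⟨[], m.1.l + 1, m.1.is⟩ := by
  have e : phi circ = cupN 1 * capN 1 := by rw [circ, map_mul, phi_dk, phi_gk]
  rw [e]
  obtain ⟨⟨js, lc, is⟩, hg⟩ := m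
  simp only at hm
  subst hm
  show cupA 1 (capA 1 ⟨[], lc, is⟩) = _
  rw [show capA 1 (⟨[], lc, is⟩ : Raw) = ⟨[1], lc, is⟩ from rfl, cupA_circ rfl]

lemma r_circpow : ∀ (l : ℕ) (m : NF), m.1.js = [] →
    ((phi (circ ^ l)) m).1 = ⟨[], m.1.l + l, m.1.is⟩
  | 0, m, hm => by
      rw [pow_zero, map_one]
      obtain ⟨⟨js, lc, is⟩, hg⟩ := m
      simp only at hm
      subst hm
      rfl
  | l+1, m, hm => by
      rw [pow_succ', map_mul]
      have h1 := r_circpow l m hm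
      have hjs : (((phi (circ ^ l))) m).1.js = [] := by rw [h1]
      show ((phi circ) ((phi (circ ^ l)) m)).1 = _
      rw [r_circ _ hjs, h1]
      have e : m.1.l + l + 1 = m.1.l + (l + 1) := by omega
      exact Raw.ext rfl e rfl

lemma r_caps : ∀ (js : List ℕ), js.Pairwise (· > ·) → (∀ x ∈ js, 0 < x) →
    ∀ (m : NF), m.1.js = [] → ((phi (capsP js)) m).1 = ⟨js, m.1.l, m.1.is⟩
  | [], _, _, m, hm => by
      rw [capsP_nil, map_one]
      obtain ⟨⟨js, lc, is⟩, hg⟩ := m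
      simp only at hm
      subst hm
      rfl
  | j :: rest, hs, hp, m, hm => by
      rw [List.pairwise_cons] at hs
      obtain ⟨hj, hrest⟩ := hs
      have hjp : 0 < j := hp j (by simp)
      rw [capsP_cons, map_mul, phi_gkN hjp]
      show capA j (((phi (capsP rest)) m).1) = _
      rw [r_caps rest hrest (fun x hx => hp x (by simp [hx])) m hm]
      show (⟨capI j rest, m.1.l, m.1.is⟩ : Raw) = _
      rw [capI_of_forall_lt rest hj]

lemma retract (r : Raw) (hg : Good r) : ((phi (evalR r)) nf1).1 = r := by
  obtain ⟨js, lc, is⟩ := r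
  obtain ⟨h1, h2, h3, h4⟩ := hg
  rw [evalR, map_mul, map_mul]
  show ((phi (capsP js)) ((phi (circ ^ lc)) ((phi (cupsP is)) nf1))).1 = _
  have e1 : ((phi (cupsP is)) nf1).1 = ⟨[], 0, is⟩ := r_cups is h2 h4
  have e1js : ((phi (cupsP is)) nf1).1.js = [] := by rw [e1]
  have e2 := r_circpow lc _ e1js
  rw [e1] at e2
  have e2js : ((phi (circ ^ lc)) ((phi (cupsP is)) nf1)).1.js = [] := by rw [e2]
  have e3 := r_caps js h1 h3 _ e2js
  rw [e2] at e3
  rw [e3]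
  refine Raw.ext ?_ ?_ ?_ <;> simp

/-! ### Existence -/

lemma exist (x : Komega) : x = evalR (((phi x) nf1)).1 := by
  induction x using Con.induction_on with
  | H w =>
    show (KCon.mk' w : Komega) = evalR (((phi (KCon.mk' w)) nf1)).1
    induction w using FreeMonoid.recOn with
    | one =>
      rw [map_one, map_one]
      show (1 : Komega) = evalR nf1.1
      rw [show nf1.1 = (⟨[], 0, []⟩ : Raw) from rfl, evalR]
      simp
    | of_mul g xs ihw =>
      rw [map_mul, map_mul]
      cases g with
      | cup k =>
        have hdk : (KCon.mk' (FreeMonoid.of (KGen.cup k)) : Komega) = dk k := rfl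
        have hphi : phi (KCon.mk' (FreeMonoid.of (KGen.cup k))) = cupN k := phi_dk k
        rw [hphi, hdk]
        show dk k * KCon.mk' xs = evalR ((cupN k ((phi (KCon.mk' xs)) nf1)).1)
        conv_lhs => rw [ihw]
        rw [← dkN_coe]
        exact dkN_evalR _ k.2 ((phi (KCon.mk' xs)) nf1).2.2.2.1 ((phi (KCon.mk' xs)) nf1).2.2.2.2
      | cap k =>
        have hgk : (KCon.mk' (FreeMonoid.of (KGen.cap k)) : Komega) = gk k := rfl
        have hphi : phi (KCon.mk' (FreeMonoid.of (KGen.cap k))) = capN k := phi_gk k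
        rw [hphi, hgk]
        show gk k * KCon.mk' xs = evalR ((capN k ((phi (KCon.mk' xs)) nf1)).1)
        conv_lhs => rw [ihw]
        rw [← gkN_coe]
        exact gkN_evalR _ k.2 ((phi (KCon.mk' xs)) nf1).2.2.2.1

lemma uniq {r r' : Raw} (hr : Good r) (hr' : Good r') (h : evalR r = evalR r') : r = r' := by
  have e := retract r hr
  rw [h, retract r' hr'] at e
  exact e.symm

/-! ### Bridging to `ℕ+` lists -/

def toPL (l : List ℕ) (h : ∀ x ∈ l, 0 < x) : List ℕ+ := l.pmap (fun x hx => pn x hx) h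

lemma toPL_map_coe : ∀ (l : List ℕ) (h : ∀ x ∈ l, 0 < x),
    (toPL l h).map (fun p : ℕ+ => (p : ℕ)) = l
  | [], _ => rfl
  | a :: rest, h => by
      simp only [toPL, List.pmap, List.map_cons]
      rw [show (((pn a (h a (by simp))) : ℕ+) : ℕ) = a from rfl]
      have ih := toPL_map_coe rest (fun x hx => h x (by simp [hx]))
      rw [show toPL rest (fun x hx => h x (by simp [hx])) =
        rest.pmap (fun x hx => pn x hx) (fun x hx => h x (by simp [hx])) from rfl] at ih
      rw [ih]

lemma toPL_map_gk : ∀ (l : List ℕ) (h : ∀ x ∈ l, 0 < x),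
    (toPL l h).map gk = l.map gkN
  | [], _ => rfl
  | a :: rest, h => by
      simp only [toPL, List.pmap, List.map_cons]
      rw [← gkN_pos (h a (by simp))]
      have ih := toPL_map_gk rest (fun x hx => h x (by simp [hx]))
      rw [show toPL rest (fun x hx => h x (by simp [hx])) =
        rest.pmap (fun x hx => pn x hx) (fun x hx => h x (by simp [hx])) from rfl] at ih
      rw [ih]

lemma toPL_map_dk : ∀ (l : List ℕ) (h : ∀ x ∈ l, 0 < x),
    (toPL l h).map dk = l.map dkN
  | [], _ => rfl
  | a :: rest, h => by
      simp only [toPL, List.pmap, List.map_cons]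
      rw [← dkN_pos (h a (by simp))]
      have ih := toPL_map_dk rest (fun x hx => h x (by simp [hx]))
      rw [show toPL rest (fun x hx => h x (by simp [hx])) =
        rest.pmap (fun x hx => pn x hx) (fun x hx => h x (by simp [hx])) from rfl] at ih
      rw [ih]

lemma toPL_sorted_gt {l : List ℕ} (hs : l.Pairwise (· > ·)) (hp : ∀ x ∈ l, 0 < x) :
    (toPL l hp).Pairwise (· > ·) :=
  List.Pairwise.pmap hs hp (fun _ ha _ hb hab => hab)

lemma toPL_sorted_lt {l : List ℕ} (hs : l.Pairwise (· < ·)) (hp : ∀ x ∈ l, 0 < x) :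
    (toPL l hp).Pairwise (· < ·) :=
  List.Pairwise.pmap hs hp (fun _ ha _ hb hab => hab)

lemma coe_sorted_gt {js' : List ℕ+} (h : js'.Pairwise (· > ·)) :
    (js'.map (fun p : ℕ+ => (p : ℕ))).Pairwise (· > ·) :=
  List.Pairwise.map _ (fun a b hab => hab) h

lemma coe_sorted_lt {js' : List ℕ+} (h : js'.Pairwise (· < ·)) :
    (js'.map (fun p : ℕ+ => (p : ℕ))).Pairwise (· < ·) :=
  List.Pairwise.map _ (fun a b hab => hab) h

lemma coe_pos (js' : List ℕ+) : ∀ x ∈ js'.map (fun p : ℕ+ => (p : ℕ)), 0 < x := by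
  intro x hx
  rcases List.mem_map.1 hx with ⟨p, _, rfl⟩
  exact p.2

lemma capsP_map_coe (js' : List ℕ+) :
    capsP (js'.map (fun p : ℕ+ => (p : ℕ))) = (js'.map gk).prod := by
  rw [capsP, List.map_map]
  congr 1
  exact List.map_congr_left (fun p _ => gkN_coe p)

lemma cupsP_map_coe (is' : List ℕ+) :
    cupsP (is'.map (fun p : ℕ+ => (p : ℕ))) = (is'.map dk).prod := by
  rw [cupsP, List.map_map]
  congr 1
  exact List.map_congr_left (fun p _ => dkN_coe p)

end KNF

open KNF in
theorem Komega.normal_form' (x : Komega) :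
    ∃ (js : List ℕ+) (l : ℕ) (is : List ℕ+),
      List.Pairwise (· > ·) js ∧ List.Pairwise (· < ·) is ∧
      x = (js.map gk).prod * circ ^ l * (is.map dk).prod ∧
      ∀ (js' : List ℕ+) (l' : ℕ) (is' : List ℕ+),
        List.Pairwise (· > ·) js' → List.Pairwise (· < ·) is' →
        x = (js'.map gk).prod * circ ^ l' * (is'.map dk).prod →
        js' = js ∧ l' = l ∧ is' = is := by
  obtain ⟨h1, h2, h3, h4⟩ := ((phi x) nf1).2
  refine ⟨toPL ((phi x) nf1).1.js h3, ((phi x) nf1).1.l, toPL ((phi x) nf1).1.is h4,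
    toPL_sorted_gt h1 h3, toPL_sorted_lt h2 h4, ?_, ?_⟩
  · rw [toPL_map_gk, toPL_map_dk]
    exact exist x
  · intro js' l' is' hs1 hs2 hx
    have hg' : Good ⟨js'.map (fun p : ℕ+ => (p : ℕ)), l', is'.map (fun p : ℕ+ => (p : ℕ))⟩ :=
      ⟨coe_sorted_gt hs1, coe_sorted_lt hs2, coe_pos js', coe_pos is'⟩
    have he : evalR ⟨js'.map (fun p : ℕ+ => (p : ℕ)), l', is'.map (fun p : ℕ+ => (p : ℕ))⟩ = x := by
      rw [evalR]
      show capsP (js'.map _) * circ ^ l' * cupsP (is'.map _) = x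
      rw [capsP_map_coe, cupsP_map_coe, ← hx]
    have hrr := uniq hg' ((phi x) nf1).2 (he.trans (exist x))
    have hinj : Function.Injective (List.map (fun p : ℕ+ => (p : ℕ))) :=
      List.map_injective_iff.2 (fun a b hab => Subtype.ext hab)
    refine ⟨?_, ?_, ?_⟩
    · apply hinj
      rw [toPL_map_coe]
      exact congrArg Raw.js hrr
    · exact congrArg Raw.l hrr
    · apply hinj
      rw [toPL_map_coe]
      exact congrArg Raw.is hrr


/-- Normal form in `K_ω`, existence and uniqueness: every element of `K_ω` can be written
as `γ_{j₁} ⋯ γ_{j_m} · c^l · δ_{i₁} ⋯ δ_{i_n}` with `j₁ > … > j_m` and `i₁ < … < i_n`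
(the empty product being `1`), and the numbers `m, n, l` and the index sequences are
uniquely determined by the element. -/
theorem Komega.normal_form (x : Komega) :
    ∃ (js : List ℕ+) (l : ℕ) (is : List ℕ+),
      List.Pairwise (· > ·) js ∧ List.Pairwise (· < ·) is ∧
      x = (js.map gk).prod * circ ^ l * (is.map dk).prod ∧
      ∀ (js' : List ℕ+) (l' : ℕ) (is' : List ℕ+),
        List.Pairwise (· > ·) js' → List.Pairwise (· < ·) is' →
        x = (js'.map gk).prod * circ ^ l' * (is'.map dk).prod →
        js' = js ∧ l' = l ∧ is' = is := by
  exact Komega.normal_form' x
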